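/- In the Node Model, the degree-weighted average M(t) = Σ_{u∈V} (d_u/(2m))·ξ_u(t) is a martingale: E(M(t+1) | ξ(t)) = M(t). In particular E(M(t+1) | ξ(0)) = M(0), and for regular graphs E(M(t+1) | ξ(0)) = Avg(0) = (1/n)Σ_{u∈V} ξ_u(0). -/

import Mathlib

open MeasureTheory ProbabilityTheory Finset

instance finsetFinMeasurableSpace (n : ℕ) : MeasurableSpace (Finset (Fin n)) := ⊤

/-- A step of the Node Model: selected node together with the selected set of neighbours. -/
abbrev NodeStep (n : ℕ) := Fin n × Finset (Fin n)

/-- Distribution of a single step of the Node Model: a uniformly random node `u`,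
together with a uniformly random set of `k` of its neighbours. -/
noncomputable def nodeStepPMF {n : ℕ} (G : SimpleGraph (Fin n)) [DecidableRel G.Adj]
    (hn : Nonempty (Fin n)) (k : ℕ) (hk : ∀ u, k ≤ G.degree u) : PMF (NodeStep n) :=
  letI := hn
  (PMF.uniformOfFintype (Fin n)).bind fun u =>
    (PMF.uniformOfFinset ((G.neighborFinset u).powersetCard k)
      (Finset.powersetCard_nonempty.2 (hk u))).map fun S => (u, S)

/-- One update of the Node Model: the selected node `s.1` replaces its value by an
`α`-fraction of its own value plus a `(1-α)/k`-fraction of the values of the selected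
neighbours `s.2`. -/
noncomputable def nodeUpdate {n : ℕ} (α : ℝ) (k : ℕ) (s : NodeStep n) (ξ : Fin n → ℝ) :
    Fin n → ℝ :=
  fun w => if w = s.1 then α * ξ w + ((1 - α) / k) * ∑ v ∈ s.2, ξ v else ξ w

/-- The trajectory of node values of the Node Model, given the sequence of step choices. -/
noncomputable def nodeTraj {n : ℕ} (α : ℝ) (k : ℕ) (ξ0 : Fin n → ℝ)
    (ω : ℕ → NodeStep n) : ℕ → Fin n → ℝ
  | 0 => ξ0
  | t + 1 => nodeUpdate α k (ω t) (nodeTraj α k ξ0 ω t)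

/-- Stationary distribution of the lazy random walk: `π u = d_u / (2m)`. -/
noncomputable def piRW {n : ℕ} (G : SimpleGraph (Fin n)) [DecidableRel G.Adj] (u : Fin n) : ℝ :=
  (G.degree u : ℝ) / (2 * (G.edgeFinset.card : ℝ))

/-- The potential `φ(ξ) = (1/2) Σ_{u,v} π_u π_v (ξ_u - ξ_v)²`. -/
noncomputable def phi {n : ℕ} (G : SimpleGraph (Fin n)) [DecidableRel G.Adj]
    (ξ : Fin n → ℝ) : ℝ :=
  (1 / 2) * ∑ u, ∑ v, piRW G u * piRW G v * (ξ u - ξ v) ^ 2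

/-- Transition matrix of the lazy random walk on `G`. -/
noncomputable def lazyP {n : ℕ} (G : SimpleGraph (Fin n)) [DecidableRel G.Adj] :
    Matrix (Fin n) (Fin n) ℝ :=
  Matrix.of fun i j =>
    if i = j then 1 / 2 else if G.Adj i j then 1 / (2 * (G.degree i : ℝ)) else 0

/-- `lam` is the second-largest eigenvalue of the (reversible) lazy random-walk matrix `P`:
it is the largest eigenvalue attained on the space of vectors `π`-orthogonal to `1`. -/
def IsSecondEigenvalueP {n : ℕ} (G : SimpleGraph (Fin n)) [DecidableRel G.Adj]
    (lam : ℝ) : Prop :=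
  (∃ f : Fin n → ℝ, f ≠ 0 ∧ (lazyP G).mulVec f = lam • f ∧ ∑ x, piRW G x * f x = 0) ∧
  ∀ lam' : ℝ,
    (∃ f : Fin n → ℝ, f ≠ 0 ∧ (lazyP G).mulVec f = lam' • f ∧ ∑ x, piRW G x * f x = 0) →
      lam' ≤ lam

/-- The degree-weighted average `M(ξ) = Σ_u (d_u/(2m)) ξ_u`. -/
noncomputable def Mdeg {n : ℕ} (G : SimpleGraph (Fin n)) [DecidableRel G.Adj]
    (ξ : Fin n → ℝ) : ℝ :=
  ∑ u, piRW G u * ξ u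

/-- The plain average `Avg(ξ) = (1/n) Σ_u ξ_u`. -/
noncomputable def Avg {n : ℕ} (ξ : Fin n → ℝ) : ℝ :=
  (1 / (n : ℝ)) * ∑ u, ξ u


open scoped ENNReal

instance msc_finset (n : ℕ) : MeasurableSingletonClass (Finset (Fin n)) :=
  ⟨fun _ => MeasurableSpace.measurableSet_top⟩

namespace NMAux

variable {n : ℕ}

lemma card_filter_mem_powersetCard (A : Finset (Fin n)) (k : ℕ) (hk : 1 ≤ k) (v : Fin n) :
    ((A.powersetCard k).filter (fun S => v ∈ S)).card
      = if v ∈ A then (A.card - 1).choose (k - 1) else 0 := by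
  split_ifs with hv
  · rw [← Finset.card_erase_of_mem hv, ← Finset.card_powersetCard]
    refine Finset.card_bij' (fun S _ => S.erase v) (fun T _ => insert v T) ?_ ?_ ?_ ?_
    · intro S hS
      simp only [Finset.mem_filter, Finset.mem_powersetCard] at hS
      simp only [Finset.mem_powersetCard]
      exact ⟨Finset.erase_subset_erase v hS.1.1,
        by rw [Finset.card_erase_of_mem hS.2, hS.1.2]⟩
    · intro T hT
      simp only [Finset.mem_powersetCard] at hT
      have hvT : v ∉ T := fun h => (Finset.notMem_erase v A) (hT.1 h)
      simp only [Finset.mem_filter, Finset.mem_powersetCard]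
      refine ⟨⟨Finset.insert_subset hv (hT.1.trans (Finset.erase_subset v A)), ?_⟩,
        Finset.mem_insert_self v T⟩
      rw [Finset.card_insert_of_notMem hvT, hT.2]
      omega
    · intro S hS
      simp only [Finset.mem_filter] at hS
      exact Finset.insert_erase hS.2
    · intro T hT
      simp only [Finset.mem_powersetCard] at hT
      exact Finset.erase_insert (fun h => (Finset.notMem_erase v A) (hT.1 h))
  · rw [Finset.card_eq_zero, Finset.filter_eq_empty_iff]
    intro S hS
    simp only [Finset.mem_powersetCard] at hS
    exact fun h => hv (hS.1 h)

lemma nodeStepPMF_apply (G : SimpleGraph (Fin n)) [DecidableRel G.Adj]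
    (hn : Nonempty (Fin n)) (k : ℕ) (hk : ∀ u, k ≤ G.degree u) (u : Fin n)
    (S : Finset (Fin n)) :
    nodeStepPMF G hn k hk (u, S) =
      (n : ℝ≥0∞)⁻¹ *
        (if S ∈ (G.neighborFinset u).powersetCard k
          then (((G.degree u).choose k : ℝ≥0∞))⁻¹ else 0) := by
  classical
  unfold nodeStepPMF
  rw [PMF.bind_apply]
  rw [tsum_eq_single u ?_]
  · rw [PMF.map_apply, tsum_eq_single S ?_]
    · simp only [PMF.uniformOfFintype_apply, Fintype.card_fin, PMF.uniformOfFinset_apply,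
        Finset.card_powersetCard, SimpleGraph.card_neighborFinset_eq_degree, if_pos rfl]
      simp
    · intro T hT
      rw [if_neg]
      simp only [Prod.mk.injEq, not_and]
      exact fun _ h => hT h.symm
  · intro w hw
    rw [PMF.map_apply]
    have h0 : ∀ T : Finset (Fin n), ((u, S) = (w, T) → False) := by
      intro T h
      exact hw (congrArg Prod.fst h).symm
    refine mul_eq_zero_of_right _ ?_
    rw [ENNReal.summable.tsum_eq_zero_iff]
    intro T
    rw [if_neg (h0 T)]

lemma nodeStep_expect (G : SimpleGraph (Fin n)) [DecidableRel G.Adj]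
    (hn : Nonempty (Fin n)) (k : ℕ) (hk : ∀ u, k ≤ G.degree u) (g : NodeStep n → ℝ) :
    ∑ s : NodeStep n, ((nodeStepPMF G hn k hk) s).toReal * g s
      = ∑ u : Fin n, (n : ℝ)⁻¹ * ∑ S ∈ (G.neighborFinset u).powersetCard k,
          (((G.degree u).choose k : ℝ))⁻¹ * g (u, S) := by
  classical
  rw [Fintype.sum_prod_type]
  refine Finset.sum_congr rfl fun u _ => ?_
  rw [Finset.mul_sum, ← Fintype.sum_ite_mem ((G.neighborFinset u).powersetCard k)
    (fun S => (n : ℝ)⁻¹ * ((((G.degree u).choose k : ℝ))⁻¹ * g (u, S)))]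
  refine Finset.sum_congr rfl fun S _ => ?_
  rw [nodeStepPMF_apply G hn k hk u S]
  split_ifs with hS
  · rw [ENNReal.toReal_mul, ENNReal.toReal_inv, ENNReal.toReal_inv]
    simp [mul_assoc]
  · simp

noncomputable def cWeight (G : SimpleGraph (Fin n)) [DecidableRel G.Adj] (α : ℝ) (k : ℕ)
    (u : Fin n) (s : NodeStep n) : ℝ :=
  piRW G s.1 * ((α - 1) * (if u = s.1 then 1 else 0)
    + ((1 - α) / k) * (if u ∈ s.2 then 1 else 0))

lemma sum_cWeight_mul (G : SimpleGraph (Fin n)) [DecidableRel G.Adj] (α : ℝ) (k : ℕ)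
    (s : NodeStep n) (ξ : Fin n → ℝ) :
    ∑ u, cWeight G α k u s * ξ u
      = piRW G s.1 * ((α - 1) * ξ s.1 + ((1 - α) / k) * ∑ v ∈ s.2, ξ v) := by
  have h : ∀ u, cWeight G α k u s * ξ u
      = piRW G s.1 * (α - 1) * (if u = s.1 then ξ u else 0)
        + piRW G s.1 * ((1 - α) / k) * (if u ∈ s.2 then ξ u else 0) := by
    intro u
    unfold cWeight
    split_ifs <;> ring
  rw [Finset.sum_congr rfl fun u _ => h u, Finset.sum_add_distrib,
    ← Finset.mul_sum, ← Finset.mul_sum, Finset.sum_ite_eq' Finset.univ s.1 ξ,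
    Fintype.sum_ite_mem s.2 ξ]
  simp only [Finset.mem_univ, if_pos]
  ring

lemma Mdeg_update_eq (G : SimpleGraph (Fin n)) [DecidableRel G.Adj] (α : ℝ) (k : ℕ)
    (s : NodeStep n) (ξ : Fin n → ℝ) :
    Mdeg G (nodeUpdate α k s ξ) = Mdeg G ξ + ∑ u, cWeight G α k u s * ξ u := by
  rw [sum_cWeight_mul]
  unfold Mdeg nodeUpdate
  have h : ∀ w, piRW G w * (if w = s.1 then α * ξ w + ((1 - α) / k) * ∑ v ∈ s.2, ξ v else ξ w)
      = piRW G w * ξ w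
        + (if w = s.1
            then piRW G s.1 * ((α - 1) * ξ s.1 + ((1 - α) / k) * ∑ v ∈ s.2, ξ v) else 0) := by
    intro w
    split_ifs with hw
    · subst hw; ring
    · ring
  rw [Finset.sum_congr rfl fun w _ => h w, Finset.sum_add_distrib,
    Finset.sum_ite_eq' Finset.univ s.1]
  simp

set_option maxHeartbeats 1600000 in
lemma sum_pmf_cWeight (G : SimpleGraph (Fin n)) [DecidableRel G.Adj]
    (hn : Nonempty (Fin n)) (α : ℝ) (k : ℕ) (hk1 : 1 ≤ k) (hk : ∀ u, k ≤ G.degree u)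
    (u : Fin n) :
    ∑ s : NodeStep n, ((nodeStepPMF G hn k hk) s).toReal * cWeight G α k u s = 0 := by
  rw [nodeStep_expect]
  have hm2 : (2 * (G.edgeFinset.card : ℝ)) ≠ 0 := by
    have h1 : 1 ≤ G.degree u := le_trans hk1 (hk u)
    have h2 : G.degree u ≤ ∑ v, G.degree v :=
      Finset.single_le_sum (f := fun v => G.degree v) (fun v _ => Nat.zero_le _)
        (Finset.mem_univ u)
    have h3 := G.sum_degrees_eq_twice_card_edges
    have : 1 ≤ 2 * G.edgeFinset.card := by omega
    have : (1 : ℝ) ≤ 2 * (G.edgeFinset.card : ℝ) := by exact_mod_cast this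
    linarith
  have key : ∀ w : Fin n,
      ∑ S ∈ (G.neighborFinset w).powersetCard k,
        (((G.degree w).choose k : ℝ))⁻¹ * cWeight G α k u (w, S)
      = (α - 1) * (if u = w then piRW G w else 0)
        + (1 - α) * (if w ∈ G.neighborFinset u then (2 * (G.edgeFinset.card : ℝ))⁻¹ else 0) := by
    intro w
    have hdk : k ≤ G.degree w := hk w
    have hC : (((G.degree w).choose k : ℝ)) ≠ 0 :=
      Nat.cast_ne_zero.2 (Nat.choose_pos hdk).ne'
    have hkR : (k : ℝ) ≠ 0 := Nat.cast_ne_zero.2 (by omega)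
    have hdR : ((G.degree w : ℝ)) ≠ 0 := Nat.cast_ne_zero.2 (by omega)
    have hid : (G.degree w : ℝ) * (((G.degree w - 1).choose (k - 1) : ℕ) : ℝ)
        = (k : ℝ) * (((G.degree w).choose k : ℕ) : ℝ) := by
      have h1 : G.degree w - 1 + 1 = G.degree w := by omega
      have h2 : k - 1 + 1 = k := by omega
      have h3 := Nat.add_one_mul_choose_eq (G.degree w - 1) (k - 1)
      rw [h1, h2] at h3
      exact_mod_cast h3.trans (mul_comm _ _)
    have hsplit : ∀ S : Finset (Fin n),
        (((G.degree w).choose k : ℝ))⁻¹ * cWeight G α k u (w, S)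
        = (((G.degree w).choose k : ℝ))⁻¹ * (piRW G w * (α - 1)) * (if u = w then 1 else 0)
          + (((G.degree w).choose k : ℝ))⁻¹ * (piRW G w * ((1 - α) / k))
              * (if u ∈ S then (1 : ℝ) else 0) := by
      intro S
      unfold cWeight
      split_ifs <;> ring
    rw [Finset.sum_congr rfl fun S _ => hsplit S, Finset.sum_add_distrib,
      Finset.sum_const, ← Finset.mul_sum, Finset.sum_boole]
    rw [Finset.card_powersetCard, SimpleGraph.card_neighborFinset_eq_degree]
    rw [card_filter_mem_powersetCard _ k hk1 u, SimpleGraph.card_neighborFinset_eq_degree]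
    have hmem : (u ∈ G.neighborFinset w) = (w ∈ G.neighborFinset u) := by
      simp [SimpleGraph.mem_neighborFinset, SimpleGraph.adj_comm]
    simp only [hmem]
    unfold piRW
    have hCC : (((G.degree w).choose k : ℝ)) * (((G.degree w).choose k : ℝ))⁻¹ = 1 :=
      mul_inv_cancel₀ hC
    have hkk : (k : ℝ) * (k : ℝ)⁻¹ = 1 := mul_inv_cancel₀ hkR
    rw [nsmul_eq_mul]
    push_cast
    set m2 := 2 * (G.edgeFinset.card : ℝ) with hm2def
    set C := (((G.degree w).choose k : ℕ) : ℝ) with hCdef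
    set d := ((G.degree w : ℕ) : ℝ) with hddef
    set ch := (((G.degree w - 1).choose (k - 1) : ℕ) : ℝ) with hchdef
    split_ifs with h1 h2 h2
    · exfalso
      rw [h1] at h2
      exact (G.notMem_neighborFinset_self w) h2
    · simp only [div_eq_mul_inv, mul_zero, mul_one, add_zero]
      linear_combination (d * m2⁻¹ * (α - 1)) * hCC
    · simp only [div_eq_mul_inv, mul_zero, mul_one, zero_mul, zero_add, add_zero]
      linear_combination (C⁻¹ * (k : ℝ)⁻¹ * m2⁻¹ * (1 - α)) * hid
        + ((1 - α) * m2⁻¹ * ((k : ℝ) * (k : ℝ)⁻¹)) * hCC + ((1 - α) * m2⁻¹) * hkk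
    · simp
  rw [Finset.sum_congr rfl fun w _ => congrArg (fun x => (n : ℝ)⁻¹ * x) (key w)]
  have hsplit2 : ∀ w : Fin n,
      (n : ℝ)⁻¹ * ((α - 1) * (if u = w then piRW G w else 0)
          + (1 - α) * (if w ∈ G.neighborFinset u then (2 * (G.edgeFinset.card : ℝ))⁻¹ else 0))
      = ((n : ℝ)⁻¹ * (α - 1)) * (if u = w then piRW G w else 0)
        + ((n : ℝ)⁻¹ * (1 - α))
            * (if w ∈ G.neighborFinset u then (2 * (G.edgeFinset.card : ℝ))⁻¹ else 0) := by
    intro w; ring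
  rw [Finset.sum_congr rfl fun w _ => hsplit2 w, Finset.sum_add_distrib,
    ← Finset.mul_sum, ← Finset.mul_sum,
    Finset.sum_ite_eq Finset.univ u (piRW G), Fintype.sum_ite_mem,
    Finset.sum_const, SimpleGraph.card_neighborFinset_eq_degree, nsmul_eq_mul]
  simp only [Finset.mem_univ, if_pos]
  unfold piRW
  rw [div_eq_mul_inv]
  ring

lemma expected_Mdeg_update (G : SimpleGraph (Fin n)) [DecidableRel G.Adj]
    (hn : Nonempty (Fin n)) (α : ℝ) (k : ℕ) (hk1 : 1 ≤ k) (hk : ∀ u, k ≤ G.degree u)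
    (ξ : Fin n → ℝ) :
    ∑ s : NodeStep n, ((nodeStepPMF G hn k hk) s).toReal * Mdeg G (nodeUpdate α k s ξ)
      = Mdeg G ξ := by
  have hsum1 : ∑ s : NodeStep n, ((nodeStepPMF G hn k hk) s).toReal = 1 := by
    have h := (nodeStepPMF G hn k hk).tsum_coe
    rw [tsum_fintype] at h
    rw [← ENNReal.toReal_sum (fun s _ => PMF.apply_ne_top _ s), h, ENNReal.toReal_one]
  rw [Finset.sum_congr rfl
    (fun s _ => by rw [Mdeg_update_eq G α k s ξ, mul_add, Finset.mul_sum])]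
  rw [Finset.sum_add_distrib, ← Finset.sum_mul, hsum1, one_mul, Finset.sum_comm]
  have hz : ∀ u : Fin n,
      ∑ s : NodeStep n,
        ((nodeStepPMF G hn k hk) s).toReal * (cWeight G α k u s * ξ u) = 0 := by
    intro u
    have h := sum_pmf_cWeight G hn α k hk1 hk u
    have h2 : ∀ s : NodeStep n,
        ((nodeStepPMF G hn k hk) s).toReal * (cWeight G α k u s * ξ u)
          = ((nodeStepPMF G hn k hk) s).toReal * cWeight G α k u s * ξ u :=
      fun s => (mul_assoc _ _ _).symm
    rw [Finset.sum_congr rfl fun s _ => h2 s, ← Finset.sum_mul, h, zero_mul]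
  rw [Finset.sum_congr rfl fun u _ => hz u]
  simp

end NMAux


namespace NMAux

noncomputable def trajFin {n : ℕ} (α : ℝ) (k : ℕ) (ξ0 : Fin n → ℝ) :
    (t : ℕ) → (Fin t → NodeStep n) → Fin n → ℝ
  | 0, _ => ξ0
  | (t+1), y => nodeUpdate α k (y (Fin.last t)) (trajFin α k ξ0 t (fun i => y i.castSucc))

lemma trajFin_eq {n : ℕ} (α : ℝ) (k : ℕ) (ξ0 : Fin n → ℝ) (ω : ℕ → NodeStep n) :
    ∀ t, trajFin α k ξ0 t (fun i => ω i) = nodeTraj α k ξ0 ω t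
  | 0 => rfl
  | (t+1) => by
    show nodeUpdate α k (ω t)
        (trajFin α k ξ0 t (fun i => ω ((i.castSucc : Fin (t+1)) : ℕ))) = _
    have h : (fun i : Fin t => ω ((i.castSucc : Fin (t+1)) : ℕ)) = fun i : Fin t => ω i := by
      funext i
      simp
    rw [h, trajFin_eq α k ξ0 ω t]
    rfl

lemma integrable_comp_finite {Ω : Type} [MeasurableSpace Ω] {Pr : MeasureTheory.Measure Ω}
    [MeasureTheory.IsProbabilityMeasure Pr] {β : Type*} [Fintype β] [MeasurableSpace β]
    [MeasurableSingletonClass β] {Y : Ω → β} (hY : Measurable Y) (g : β → ℝ) :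
    MeasureTheory.Integrable (fun ω => g (Y ω)) Pr := by
  haveI : MeasureTheory.IsProbabilityMeasure (Pr.map Y) :=
    MeasureTheory.Measure.isProbabilityMeasure_map hY.aemeasurable
  have h1 : MeasureTheory.Integrable g (Pr.map Y) := .of_finite
  exact (MeasureTheory.integrable_map_measure
    (measurable_of_countable g).aestronglyMeasurable hY.aemeasurable).mp h1

end NMAux

/-- **Lemma 1 (martingale property of the Node Model).**
The degree-weighted average `M(t) = Σ_u (d_u/(2m)) ξ_u(t)` is a martingale:
`E(M(t+1) | ξ(t)) = M(t)` (first conjunct: the expectation of `M` after one random step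
from any current state `ξ` equals `M(ξ)`); in particular `E(M(t+1) | ξ(0)) = M(0)`
(second conjunct), and for regular graphs `E(M(t+1) | ξ(0)) = Avg(0)` (third conjunct). -/
theorem node_model_M_martingale {n : ℕ} (G : SimpleGraph (Fin n)) [DecidableRel G.Adj]
    (hconn : G.Connected) (α : ℝ) (hα : α ∈ Set.Ioo (0 : ℝ) 1)
    (k : ℕ) (hk1 : 1 ≤ k) (hk : ∀ u, k ≤ G.degree u)
    (ξ0 : Fin n → ℝ)
    (Ω : Type) (mΩ : MeasurableSpace Ω) (Pr : Measure Ω) (hPr : IsProbabilityMeasure Pr)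
    (steps : ℕ → Ω → NodeStep n) (hmeas : ∀ t, Measurable (steps t))
    (hiid : iIndepFun steps Pr)
    (hdist : ∀ t, Measure.map (steps t) Pr = (nodeStepPMF G hconn.nonempty k hk).toMeasure) :
    (∀ ξ : Fin n → ℝ,
        ∑ s : NodeStep n, ((nodeStepPMF G hconn.nonempty k hk) s).toReal *
          Mdeg G (nodeUpdate α k s ξ) = Mdeg G ξ) ∧
    (∀ t : ℕ, ∫ ω, Mdeg G (nodeTraj α k ξ0 (fun s => steps s ω) (t + 1)) ∂Pr = Mdeg G ξ0) ∧
    (∀ d : ℕ, G.IsRegularOfDegree d →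
      ∀ t : ℕ, ∫ ω, Mdeg G (nodeTraj α k ξ0 (fun s => steps s ω) (t + 1)) ∂Pr = Avg ξ0) := by
    classical
  haveI := hPr
  have key1 : ∀ ξ : Fin n → ℝ,
      ∑ s : NodeStep n, ((nodeStepPMF G hconn.nonempty k hk) s).toReal *
        Mdeg G (nodeUpdate α k s ξ) = Mdeg G ξ :=
    fun ξ => NMAux.expected_Mdeg_update G hconn.nonempty α k hk1 hk ξ
  have main : ∀ t : ℕ,
      ∫ ω, Mdeg G (nodeTraj α k ξ0 (fun s => steps s ω) t) ∂Pr = Mdeg G ξ0 := by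
    intro t
    induction t with
    | zero =>
      simp only [nodeTraj]
      rw [integral_const]
      simp
    | succ t ih =>
      set Y : Ω → (Fin t → NodeStep n) := fun ω i => steps i ω with hYdef
      have hYmeas : Measurable Y := measurable_pi_lambda _ fun i => hmeas i
      have htraj : ∀ ω : Ω, nodeTraj α k ξ0 (fun s => steps s ω) t
          = NMAux.trajFin α k ξ0 t (Y ω) :=
        fun ω => (NMAux.trajFin_eq α k ξ0 (fun s => steps s ω) t).symm
      set Y2 : Ω → (Fin (t+1) → NodeStep n) := fun ω i => steps i ω with hY2def
      have hY2meas : Measurable Y2 := measurable_pi_lambda _ fun i => hmeas i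
      set gU : Fin n → (Fin (t+1) → NodeStep n) → ℝ := fun u y =>
        NMAux.cWeight G α k u (y (Fin.last t))
          * NMAux.trajFin α k ξ0 t (fun i => y i.castSucc) u with hgU
      have hdecomp : ∀ ω : Ω,
          Mdeg G (nodeTraj α k ξ0 (fun s => steps s ω) (t+1))
            = Mdeg G (nodeTraj α k ξ0 (fun s => steps s ω) t)
              + ∑ u, NMAux.cWeight G α k u (steps t ω)
                  * nodeTraj α k ξ0 (fun s => steps s ω) t u := by
        intro ω
        show Mdeg G (nodeUpdate α k (steps t ω) _) = _
        rw [NMAux.Mdeg_update_eq]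
      have e1 : (fun ω => Mdeg G (nodeTraj α k ξ0 (fun s => steps s ω) t))
          = fun ω => Mdeg G (NMAux.trajFin α k ξ0 t (Y ω)) :=
        funext fun ω => by rw [htraj ω]
      have e2 : ∀ u : Fin n,
          (fun ω => NMAux.cWeight G α k u (steps t ω)
              * nodeTraj α k ξ0 (fun s => steps s ω) t u)
            = fun ω => gU u (Y2 ω) := by
        intro u
        funext ω
        rw [← NMAux.trajFin_eq α k ξ0 (fun s => steps s ω) t]
        rfl
      have I1 : Integrable (fun ω => Mdeg G (nodeTraj α k ξ0 (fun s => steps s ω) t)) Pr := by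
        rw [e1]
        exact NMAux.integrable_comp_finite (Pr := Pr) hYmeas (fun y => Mdeg G (NMAux.trajFin α k ξ0 t y))
      have I2 : ∀ u : Fin n,
          Integrable (fun ω => NMAux.cWeight G α k u (steps t ω)
            * nodeTraj α k ξ0 (fun s => steps s ω) t u) Pr := by
        intro u
        rw [e2 u]
        exact NMAux.integrable_comp_finite (Pr := Pr) hY2meas (gU u)
      have hXm : ∀ u : Fin n,
          Measurable (fun ω => NMAux.cWeight G α k u (steps t ω)) :=
        fun u => (measurable_of_countable (NMAux.cWeight G α k u)).comp (hmeas t)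
      have hYm : Measurable (fun ω => nodeTraj α k ξ0 (fun s => steps s ω) t) := by
        have h : (fun ω => nodeTraj α k ξ0 (fun s => steps s ω) t)
            = fun ω => NMAux.trajFin α k ξ0 t (Y ω) := funext fun ω => htraj ω
        rw [h]
        exact (measurable_of_countable (NMAux.trajFin α k ξ0 t)).comp hYmeas
      have hind : ∀ u : Fin n,
          IndepFun (fun ω => NMAux.cWeight G α k u (steps t ω))
            (fun ω => nodeTraj α k ξ0 (fun s => steps s ω) t u) Pr := by
        intro u
        have base := hiid.indepFun_finset {t} (Finset.range t)
          (by simp) hmeas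
        have h := base.comp
          (φ := fun z : (↥({t} : Finset ℕ) → NodeStep n) =>
            NMAux.cWeight G α k u (z ⟨t, Finset.mem_singleton_self t⟩))
          (ψ := fun z : (↥(Finset.range t) → NodeStep n) =>
            NMAux.trajFin α k ξ0 t (fun i : Fin t => z ⟨(i : ℕ), Finset.mem_range.2 i.2⟩) u)
          (measurable_of_countable _) (measurable_of_countable _)
        have eL : (fun ω => NMAux.cWeight G α k u (steps t ω))
            = (fun z : (↥({t} : Finset ℕ) → NodeStep n) =>
                NMAux.cWeight G α k u (z ⟨t, Finset.mem_singleton_self t⟩))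
              ∘ (fun a (i : ↥({t} : Finset ℕ)) => steps (↑i) a) := rfl
        have eR : (fun ω => nodeTraj α k ξ0 (fun s => steps s ω) t u)
            = (fun z : (↥(Finset.range t) → NodeStep n) =>
                NMAux.trajFin α k ξ0 t
                  (fun i : Fin t => z ⟨(i : ℕ), Finset.mem_range.2 i.2⟩) u)
              ∘ (fun a (i : ↥(Finset.range t)) => steps (↑i) a) := by
          funext ω
          show nodeTraj α k ξ0 (fun s => steps s ω) t u
            = NMAux.trajFin α k ξ0 t (fun i : Fin t => steps i ω) u
          rw [NMAux.trajFin_eq α k ξ0 (fun s => steps s ω) t]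
        rw [eL, eR]
        exact h
      have hcint : ∀ u : Fin n,
          ∫ ω, NMAux.cWeight G α k u (steps t ω) ∂Pr = 0 := by
        intro u
        rw [← integral_map (hmeas t).aemeasurable
          (measurable_of_countable _).aestronglyMeasurable, hdist t, PMF.integral_eq_sum]
        simpa [smul_eq_mul] using NMAux.sum_pmf_cWeight G hconn.nonempty α k hk1 hk u
      rw [integral_congr_ae (Filter.Eventually.of_forall hdecomp)]
      rw [integral_add I1 (integrable_finset_sum _ fun u _ => I2 u), ih,
        integral_finset_sum _ fun u _ => I2 u]
      have hzero : ∀ u : Fin n,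
          ∫ ω, NMAux.cWeight G α k u (steps t ω)
            * nodeTraj α k ξ0 (fun s => steps s ω) t u ∂Pr = 0 := by
        intro u
        have h := (hind u).integral_mul_eq_mul_integral ((hXm u).aestronglyMeasurable)
          (((measurable_pi_apply u).comp hYm).aestronglyMeasurable)
        have h2 : ∫ ω, NMAux.cWeight G α k u (steps t ω)
              * nodeTraj α k ξ0 (fun s => steps s ω) t u ∂Pr
            = (∫ ω, NMAux.cWeight G α k u (steps t ω) ∂Pr)
              * ∫ ω, nodeTraj α k ξ0 (fun s => steps s ω) t u ∂Pr := h
        rw [h2, hcint u, zero_mul]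
      rw [Finset.sum_congr rfl fun u _ => hzero u]
      simp
  refine ⟨key1, fun t => main (t+1), ?_⟩
  intro d hreg t
  rw [main (t+1)]
  -- Mdeg = Avg for regular graphs
  have hn0 : 0 < n := Fintype.card_fin n ▸ Fintype.card_pos_iff.2 hconn.nonempty
  obtain ⟨u0⟩ := hconn.nonempty
  have hd1 : 1 ≤ d := by
    have := hk u0
    rw [hreg u0] at this
    omega
  have hsum := G.sum_degrees_eq_twice_card_edges
  have h2m : (2 * (G.edgeFinset.card : ℝ)) = (n : ℝ) * d := by
    have : ∑ v, G.degree v = n * d := by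
      rw [Finset.sum_congr rfl fun v _ => hreg v, Finset.sum_const, Finset.card_univ,
        Fintype.card_fin, smul_eq_mul]
    rw [this] at hsum
    exact_mod_cast hsum.symm
  unfold Mdeg piRW Avg
  rw [Finset.mul_sum]
  refine Finset.sum_congr rfl fun u _ => ?_
  rw [hreg u, h2m]
  have hd0 : ((d : ℝ)) ≠ 0 := Nat.cast_ne_zero.2 (by omega)
  have hn0' : ((n : ℝ)) ≠ 0 := Nat.cast_ne_zero.2 (by omega)
  have : ((d : ℝ)) / ((n : ℝ) * d) = 1 / n := by
    field_simp
  rw [this]
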